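/- arXiv:2006.06990 — 5 statements merged into one kernel-verified Lean document; each statement's English description precedes it below -/
import Mathlib

section
/- Suppose φⁿ : ZMod J → ℝ satisfies γ₋ ≤ φⁿⱼ ≤ γ₊ for all j, and φⁿ⁺¹ : ZMod J → ℝ satisfies (1+2λ)φⁿ⁺¹ⱼ = φⁿⱼ + λφⁿ⁺¹ⱼ₊₁ + λφⁿ⁺¹ⱼ₋₁ − Δt·f(φⁿⱼ) for all j, where λ > 0, f(γ₊) = 0, and 1 − Δt·f'(u) ≥ 0 for all u ∈ [γ₋,γ₊] (f being C¹ on [γ₋,γ₊]). Then max_j φⁿ⁺¹ⱼ ≤ γ₊. -/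
/-- Key scalar fact: `u - Δt * f u ≤ γp` for `u ∈ [γm, γp]`. -/
lemma g_le (Δt γm γp : ℝ) (f f' : ℝ → ℝ)
    (hderiv : ∀ u ∈ Set.Icc γm γp, HasDerivAt f (f' u) u)
    (hfp : f γp = 0)
    (hstep : ∀ u ∈ Set.Icc γm γp, Δt * f' u ≤ 1)
    (u : ℝ) (hu : u ∈ Set.Icc γm γp) : u - Δt * f u ≤ γp := by
  set g : ℝ → ℝ := fun x => x - Δt * f x with hg
  have hgp : g γp = γp := by simp [hg, hfp]
  rcases eq_or_lt_of_le hu.2 with h | h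
  · simp [hg, h, hfp]
  · have hsub : Set.Icc u γp ⊆ Set.Icc γm γp :=
      Set.Icc_subset_Icc hu.1 le_rfl
    have hcont : ContinuousOn g (Set.Icc u γp) := fun x hx =>
      (((hasDerivAt_id x).sub ((hderiv x (hsub hx)).const_mul Δt)).continuousAt).continuousWithinAt
    have hder : ∀ x ∈ Set.Ioo u γp, HasDerivAt g (1 - Δt * f' x) x := fun x hx =>
      (hasDerivAt_id x).sub ((hderiv x (hsub (Set.mem_Icc_of_Ioo hx))).const_mul Δt)
    obtain ⟨c, hc, hceq⟩ := exists_hasDerivAt_eq_slope g (fun x => 1 - Δt * f' x) h hcont hder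
    have hc' : c ∈ Set.Icc γm γp := hsub (Set.mem_Icc_of_Ioo hc)
    have h1 : 0 ≤ 1 - Δt * f' c := by linarith [hstep c hc']
    have h2 : 0 ≤ (g γp - g u) / (γp - u) := hceq ▸ h1
    have h3 : 0 ≤ g γp - g u := by
      have hpos : (0:ℝ) < γp - u := by linarith
      have := mul_nonneg h2 hpos.le
      rwa [div_mul_cancel₀ _ hpos.ne'] at this
    have : g u ≤ γp := by rw [← hgp]; linarith
    simpa [hg] using this

/-- One-step upper bound (maximum principle, upper part) for the semi-implicit scheme. -/
theorem semiImplicit_max_upper (J : ℕ) [NeZero J] (Δt lam γm γp : ℝ)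
    (hΔt : 0 < Δt) (hlam : 0 < lam) (hγ : γm < γp) (f f' : ℝ → ℝ)
    (hderiv : ∀ u ∈ Set.Icc γm γp, HasDerivAt f (f' u) u)
    (hfp : f γp = 0)
    (hstep : ∀ u ∈ Set.Icc γm γp, Δt * f' u ≤ 1)
    (φn φn1 : ZMod J → ℝ)
    (hbound : ∀ j, γm ≤ φn j ∧ φn j ≤ γp)
    (hscheme : ∀ j, (1 + 2 * lam) * φn1 j =
      φn j + lam * φn1 (j + 1) + lam * φn1 (j - 1) - Δt * f (φn j)) :
    ∀ j, φn1 j ≤ γp := by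
  obtain ⟨j0, hj0⟩ := Finite.exists_max φn1
  have hmax1 := hj0 (j0 + 1)
  have hmax2 := hj0 (j0 - 1)
  have hs := hscheme j0
  have hb := hbound j0
  have hkey : φn1 j0 ≤ φn j0 - Δt * f (φn j0) := by nlinarith
  have := g_le Δt γm γp f f' hderiv hfp hstep (φn j0) ⟨hb.1, hb.2⟩
  intro j
  exact le_trans (hj0 j) (le_trans hkey this)
end

section
/- Suppose φⁿ : ZMod J → ℝ satisfies γ₋ ≤ φⁿⱼ ≤ γ₊ for all j, and φⁿ⁺¹ : ZMod J → ℝ satisfies (1+2λ)φⁿ⁺¹ⱼ = φⁿⱼ + λφⁿ⁺¹ⱼ₊₁ + λφⁿ⁺¹ⱼ₋₁ − Δt·f(φⁿⱼ) for all j, where λ > 0, f(γ₋) = 0, and Δt·f'(u) ≤ 1 for all u ∈ [γ₋,γ₊]. Then min_j φⁿ⁺¹ⱼ ≥ γ₋. -/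
/-- One-step lower bound (maximum principle, lower part) for the semi-implicit scheme. -/
theorem semiImplicit_min_lower (J : ℕ) [NeZero J] (Δt lam γm γp : ℝ)
    (hΔt : 0 < Δt) (hlam : 0 < lam) (hγ : γm < γp) (f f' : ℝ → ℝ)
    (hderiv : ∀ u ∈ Set.Icc γm γp, HasDerivAt f (f' u) u)
    (hfm : f γm = 0)
    (hstep : ∀ u ∈ Set.Icc γm γp, Δt * f' u ≤ 1)
    (φn φn1 : ZMod J → ℝ)
    (hbound : ∀ j, γm ≤ φn j ∧ φn j ≤ γp)
    (hscheme : ∀ j, (1 + 2 * lam) * φn1 j =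
      φn j + lam * φn1 (j + 1) + lam * φn1 (j - 1) - Δt * f (φn j)) :
    ∀ j, γm ≤ φn1 j := by
  -- Key monotonicity fact: for x ∈ [γm, γp], γm ≤ x - Δt * f x.
  have key : ∀ x ∈ Set.Icc γm γp, γm ≤ x - Δt * f x := by
    intro x hx
    rcases eq_or_lt_of_le hx.1 with h | h
    · simp [← h, hfm]
    · have hsub : Set.Icc γm x ⊆ Set.Icc γm γp := Set.Icc_subset_Icc le_rfl hx.2
      have hcont : ContinuousOn f (Set.Icc γm x) := fun y hy =>
        ((hderiv y (hsub hy)).continuousAt).continuousWithinAt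
      have hdiff : ∀ y ∈ Set.Ioo γm x, HasDerivAt f (f' y) y := fun y hy =>
        hderiv y (hsub (Set.Ioo_subset_Icc_self hy))
      obtain ⟨c, hc, hceq⟩ := exists_hasDerivAt_eq_slope f f' h hcont hdiff
      have hc' : c ∈ Set.Icc γm γp := hsub (Set.Ioo_subset_Icc_self hc)
      have h1 : Δt * f' c ≤ 1 := hstep c hc'
      have hxpos : 0 < x - γm := sub_pos.2 h
      have : Δt * f x = (Δt * f' c) * (x - γm) := by
        rw [hceq, hfm]
        field_simp
        ring
      nlinarith [mul_nonneg (sub_nonneg.2 h1) (le_of_lt hxpos)]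
  -- Take the minimizer of φn1
  obtain ⟨j0, hj0⟩ := Finite.exists_min φn1
  have h0 := hscheme j0
  have hk := key (φn j0) ⟨(hbound j0).1, (hbound j0).2⟩
  have h1 := hj0 (j0 + 1)
  have h2 := hj0 (j0 - 1)
  have hmin : γm ≤ φn1 j0 := by nlinarith
  exact fun j => le_trans hmin (hj0 j)
end

section
/- Discrete maximum principle for the semi-implicit scheme: let φ : ℕ → ZMod J → ℝ satisfy, for every n and j, (1+2λ)φ(n+1)ⱼ = φ(n)ⱼ + λφ(n+1)ⱼ₊₁ + λφ(n+1)ⱼ₋₁ − Δt·f(φ(n)ⱼ), with λ > 0, f(γ₋) = f(γ₊) = 0, Δt·f'(u) ≤ 1 for u ∈ [γ₋,γ₊], and γ₋ ≤ φ(0)ⱼ ≤ γ₊ for all j. Then γ₋ ≤ φ(n)ⱼ ≤ γ₊ for all n ≥ 0 and all j. -/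
/-- Discrete maximum principle for the semi-implicit scheme (Theorem 2.1). -/
theorem semiImplicit_maximum_principle (J : ℕ) [NeZero J] (Δt lam γm γp : ℝ)
    (hΔt : 0 < Δt) (hlam : 0 < lam) (hγ : γm < γp) (f f' : ℝ → ℝ)
    (hderiv : ∀ u ∈ Set.Icc γm γp, HasDerivAt f (f' u) u)
    (hfm : f γm = 0) (hfp : f γp = 0)
    (hstep : ∀ u ∈ Set.Icc γm γp, Δt * f' u ≤ 1)
    (φ : ℕ → ZMod J → ℝ)
    (hinit : ∀ j, γm ≤ φ 0 j ∧ φ 0 j ≤ γp)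
    (hscheme : ∀ n j, (1 + 2 * lam) * φ (n + 1) j =
      φ n j + lam * φ (n + 1) (j + 1) + lam * φ (n + 1) (j - 1) - Δt * f (φ n j)) :
    ∀ n j, γm ≤ φ n j ∧ φ n j ≤ γp := by
  set g : ℝ → ℝ := fun u => u - Δt * f u with hg
  have hgderiv : ∀ x ∈ Set.Icc γm γp, HasDerivAt g (1 - Δt * f' x) x := fun x hx =>
    (hasDerivAt_id x).sub ((hderiv x hx).const_mul Δt)
  have hgmono : MonotoneOn g (Set.Icc γm γp) := by
    apply monotoneOn_of_deriv_nonneg (convex_Icc _ _)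
    · exact fun x hx => (hgderiv x hx).continuousAt.continuousWithinAt
    · intro x hx
      rw [interior_Icc] at hx
      exact (hgderiv x (Set.Ioo_subset_Icc_self hx)).differentiableAt.differentiableWithinAt
    · intro x hx
      rw [interior_Icc] at hx
      have h := Set.Ioo_subset_Icc_self hx
      rw [(hgderiv x h).deriv]
      linarith [hstep x h]
  have hgm : g γm = γm := by simp [hg, hfm]
  have hgp : g γp = γp := by simp [hg, hfp]
  intro n
  induction n with
  | zero => exact hinit
  | succ n ih =>
    have hgb : ∀ j, γm ≤ g (φ n j) ∧ g (φ n j) ≤ γp := by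
      intro j
      constructor
      · rw [← hgm]
        exact hgmono (Set.left_mem_Icc.2 hγ.le) ⟨(ih j).1, (ih j).2⟩ (ih j).1
      · rw [← hgp]
        exact hgmono ⟨(ih j).1, (ih j).2⟩ (Set.right_mem_Icc.2 hγ.le) (ih j).2
    have hsch : ∀ j, (1 + 2 * lam) * φ (n + 1) j =
        g (φ n j) + lam * φ (n + 1) (j + 1) + lam * φ (n + 1) (j - 1) := by
      intro j
      have := hscheme n j
      simp only [hg]
      linarith
    obtain ⟨jM, hjM⟩ := Finite.exists_max (φ (n + 1))
    obtain ⟨jm, hjm⟩ := Finite.exists_min (φ (n + 1))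
    have hub : φ (n + 1) jM ≤ γp := by
      nlinarith [hsch jM, hjM (jM + 1), hjM (jM - 1), (hgb jM).2,
        mul_le_mul_of_nonneg_left (hjM (jM + 1)) hlam.le,
        mul_le_mul_of_nonneg_left (hjM (jM - 1)) hlam.le]
    have hlb : γm ≤ φ (n + 1) jm := by
      nlinarith [hsch jm, (hgb jm).1,
        mul_le_mul_of_nonneg_left (hjm (jm + 1)) hlam.le,
        mul_le_mul_of_nonneg_left (hjm (jm - 1)) hlam.le]
    exact fun j => ⟨le_trans hlb (hjm j), le_trans (hjM j) hub⟩
end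

section
/- One-step L¹ contraction estimate: suppose f is C¹ on [γ₋,γ₊] with f(0)=0, γ₋ < 0 < γ₊, and for each j there exists θⱼ ∈ [γ₋,γ₊] with (1+2λ)φⁿ⁺¹ⱼ = (1 − Δt·f'(θⱼ))φⁿⱼ + λφⁿ⁺¹ⱼ₊₁ + λφⁿ⁺¹ⱼ₋₁, where 1 − Δt·f'(u) ≥ 0 on [γ₋,γ₊]. Let L = −min_{[γ₋,γ₊]} f'. Then Σⱼ |φⁿ⁺¹ⱼ| ≤ (1 + Δt·L) Σⱼ |φⁿⱼ| ≤ e^{LΔt} Σⱼ |φⁿⱼ|. -/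
/-- One-step L¹ contraction estimate for the semi-implicit scheme. -/
theorem semiImplicit_L1_stability (J : ℕ) [NeZero J] (Δt lam γm γp L : ℝ)
    (hΔt : 0 < Δt) (hlam : 0 < lam) (hγm : γm < 0) (hγp : 0 < γp)
    (f f' : ℝ → ℝ)
    (hderiv : ∀ u ∈ Set.Icc γm γp, HasDerivAt f (f' u) u)
    (hf0 : f 0 = 0)
    (hstep : ∀ u ∈ Set.Icc γm γp, Δt * f' u ≤ 1)
    (hL : IsLeast (f' '' Set.Icc γm γp) (-L))
    (φn φn1 : ZMod J → ℝ) (θ : ZMod J → ℝ)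
    (hθ : ∀ j, θ j ∈ Set.Icc γm γp)
    (hscheme : ∀ j, (1 + 2 * lam) * φn1 j =
      (1 - Δt * f' (θ j)) * φn j + lam * φn1 (j + 1) + lam * φn1 (j - 1)) :
    (∑ j : ZMod J, |φn1 j|) ≤ (1 + Δt * L) * ∑ j : ZMod J, |φn j| ∧
    (1 + Δt * L) * (∑ j : ZMod J, |φn j|) ≤ Real.exp (L * Δt) * ∑ j : ZMod J, |φn j| := by
  have hS0 : (0:ℝ) ≤ ∑ j : ZMod J, |φn j| := Finset.sum_nonneg fun j _ => abs_nonneg _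
  have hterm : ∀ j : ZMod J, (1 + 2 * lam) * |φn1 j| ≤
      (1 + Δt * L) * |φn j| + lam * |φn1 (j + 1)| + lam * |φn1 (j - 1)| := by
    intro j
    have hpos : (0:ℝ) ≤ 1 + 2 * lam := by linarith
    have hcoef : (0:ℝ) ≤ 1 - Δt * f' (θ j) := by
      have := hstep (θ j) (hθ j); linarith
    have hlow : -L ≤ f' (θ j) := hL.2 ⟨θ j, hθ j, rfl⟩
    have hcoef2 : 1 - Δt * f' (θ j) ≤ 1 + Δt * L := by nlinarith
    have h1 : (1 + 2 * lam) * |φn1 j| = |(1 + 2 * lam) * φn1 j| := by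
      rw [abs_mul, abs_of_nonneg hpos]
    rw [h1, hscheme j]
    calc |(1 - Δt * f' (θ j)) * φn j + lam * φn1 (j + 1) + lam * φn1 (j - 1)|
        ≤ |(1 - Δt * f' (θ j)) * φn j| + |lam * φn1 (j + 1)| + |lam * φn1 (j - 1)| := by
          exact (abs_add_le _ _).trans (by gcongr; exact abs_add_le _ _)
      _ = (1 - Δt * f' (θ j)) * |φn j| + lam * |φn1 (j + 1)| + lam * |φn1 (j - 1)| := by
          rw [abs_mul, abs_mul, abs_mul, abs_of_nonneg hcoef, abs_of_pos hlam]
      _ ≤ (1 + Δt * L) * |φn j| + lam * |φn1 (j + 1)| + lam * |φn1 (j - 1)| := by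
          gcongr
  have hshift1 : ∑ j : ZMod J, |φn1 (j + 1)| = ∑ j : ZMod J, |φn1 j| :=
    Equiv.sum_comp (Equiv.addRight (1 : ZMod J)) (fun j => |φn1 j|)
  have hshift2 : ∑ j : ZMod J, |φn1 (j - 1)| = ∑ j : ZMod J, |φn1 j| := by
    have := Equiv.sum_comp (Equiv.addRight (-1 : ZMod J)) (fun j => |φn1 j|)
    simpa [sub_eq_add_neg] using this
  have hsum : (1 + 2 * lam) * (∑ j : ZMod J, |φn1 j|) ≤
      (1 + Δt * L) * (∑ j : ZMod J, |φn j|) + 2 * lam * ∑ j : ZMod J, |φn1 j| := by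
    calc (1 + 2 * lam) * (∑ j : ZMod J, |φn1 j|)
        = ∑ j : ZMod J, (1 + 2 * lam) * |φn1 j| := by rw [Finset.mul_sum]
      _ ≤ ∑ j : ZMod J, ((1 + Δt * L) * |φn j| + lam * |φn1 (j + 1)| + lam * |φn1 (j - 1)|) :=
          Finset.sum_le_sum fun j _ => hterm j
      _ = (1 + Δt * L) * (∑ j : ZMod J, |φn j|) + 2 * lam * ∑ j : ZMod J, |φn1 j| := by
          rw [Finset.sum_add_distrib, Finset.sum_add_distrib, ← Finset.mul_sum,
            ← Finset.mul_sum, ← Finset.mul_sum, hshift1, hshift2]; ring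
  refine ⟨by linarith, ?_⟩
  have hexp : 1 + Δt * L ≤ Real.exp (L * Δt) := by
    have := Real.add_one_le_exp (L * Δt); linarith
  exact mul_le_mul_of_nonneg_right hexp hS0
end

section
/- Energy stability of the semi-implicit scheme: let φⁿ, φⁿ⁺¹ : ZMod J → ℝ with γ₋ ≤ φⁿⱼ, φⁿ⁺¹ⱼ ≤ γ₊ for all j, satisfying (φⁿ⁺¹ⱼ − φⁿⱼ)/Δt = ε²∇₊∇₋φⁿ⁺¹ⱼ − f(φⁿⱼ) for all j. Suppose F : ℝ → ℝ is C² on [γ₋,γ₊] with F' = f, and Δt·f'(u) ≤ 2 for u ∈ [γ₋,γ₊]. Then E_h(φⁿ⁺¹) ≤ E_h(φⁿ), where E_h(φ) = (ε²/2)Σⱼ(∇₊φⱼ)²Δx + Σⱼ F(φⱼ)Δx. -/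
open Set Finset

/-- Shift invariance of sums over `ZMod J`. -/
lemma zmod_sum_shift (J : ℕ) [NeZero J] (g : ZMod J → ℝ) :
    ∑ j : ZMod J, g (j + 1) = ∑ j : ZMod J, g j :=
  Fintype.sum_equiv (Equiv.addRight (1 : ZMod J)) (fun j => g (j + 1)) g (fun _ => rfl)

/-- Tangent-line estimate from a one-sided bound on `f'`. -/
lemma tangent_est (Δt γm γp : ℝ) (hΔt : 0 < Δt) (F f f' : ℝ → ℝ)
    (hF : ∀ u ∈ Set.Icc γm γp, HasDerivAt F (f u) u)
    (hf : ∀ u ∈ Set.Icc γm γp, HasDerivAt f (f' u) u)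
    (hstep : ∀ u ∈ Set.Icc γm γp, Δt * f' u ≤ 2)
    {x y : ℝ} (hx : x ∈ Set.Icc γm γp) (hy : y ∈ Set.Icc γm γp) :
    F y - F x - f x * (y - x) ≤ (y - x) ^ 2 / Δt := by
  -- k is monotone on Icc
  set k : ℝ → ℝ := fun u => 2 / Δt * u - f u with hk
  have hkd : ∀ u ∈ Set.Icc γm γp, HasDerivAt k (2 / Δt - f' u) u := by
    intro u hu
    rw [hk]
    have := ((hasDerivAt_id u).const_mul (2 / Δt)).sub (hf u hu)
    exact this.congr_deriv (by ring)
  have hkmono : MonotoneOn k (Set.Icc γm γp) := by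
    apply monotoneOn_of_deriv_nonneg (convex_Icc _ _)
    · exact fun u hu => ((hkd u hu).continuousAt).continuousWithinAt
    · exact fun u hu =>
        ((hkd u (interior_subset hu)).differentiableAt).differentiableWithinAt
    · intro u hu
      rw [(hkd u (interior_subset hu)).deriv]
      have h2 : f' u ≤ 2 / Δt := (le_div_iff₀' hΔt).2 (hstep u (interior_subset hu))
      linarith
  set h : ℝ → ℝ := fun u => F u - f x * u - (u - x) ^ 2 / Δt with hh
  have hhd : ∀ u ∈ Set.Icc γm γp, HasDerivAt h (f u - f x - 2 * (u - x) / Δt) u := by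
    intro u hu
    have h1 : HasDerivAt (fun u : ℝ => (u - x) ^ 2 / Δt) (2 * (u - x) / Δt) u := by
      have := (((hasDerivAt_id u).sub_const x).pow 2).div_const Δt
      simpa [mul_comm] using this
    rw [hh]
    have := ((hF u hu).sub ((hasDerivAt_id u).const_mul (f x))).sub h1
    exact this.congr_deriv (by ring)
  have key : h y ≤ h x := by
    rcases le_total x y with hxy | hxy
    · -- h antitone on [x, γp]
      have hsub : Set.Icc x γp ⊆ Set.Icc γm γp := Set.Icc_subset_Icc hx.1 le_rfl
      have : AntitoneOn h (Set.Icc x γp) := by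
        apply antitoneOn_of_deriv_nonpos (convex_Icc _ _)
        · exact fun u hu => ((hhd u (hsub hu)).continuousAt).continuousWithinAt
        · exact fun u hu =>
            ((hhd u (hsub (interior_subset hu))).differentiableAt).differentiableWithinAt
        · intro u hu
          rw [interior_Icc] at hu
          have hu' : u ∈ Set.Icc γm γp := hsub (Set.Ioo_subset_Icc_self hu)
          rw [(hhd u hu').deriv]
          have := hkmono hx hu' hu.1.le
          simp only [hk] at this
          have h2 : f u - f x ≤ 2 / Δt * (u - x) := by linarith
          have h3 : 2 / Δt * (u - x) = 2 * (u - x) / Δt := by ring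
          linarith [h3 ▸ h2]
      exact this (Set.mem_Icc.2 ⟨le_rfl, hx.2⟩) (Set.mem_Icc.2 ⟨hxy, hy.2⟩) hxy
    · have hsub : Set.Icc γm x ⊆ Set.Icc γm γp := Set.Icc_subset_Icc le_rfl hx.2
      have : MonotoneOn h (Set.Icc γm x) := by
        apply monotoneOn_of_deriv_nonneg (convex_Icc _ _)
        · exact fun u hu => ((hhd u (hsub hu)).continuousAt).continuousWithinAt
        · exact fun u hu =>
            ((hhd u (hsub (interior_subset hu))).differentiableAt).differentiableWithinAt
        · intro u hu
          rw [interior_Icc] at hu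
          have hu' : u ∈ Set.Icc γm γp := hsub (Set.Ioo_subset_Icc_self hu)
          rw [(hhd u hu').deriv]
          have := hkmono hu' hx hu.2.le
          simp only [hk] at this
          have h2 : 2 / Δt * (u - x) ≤ f u - f x := by linarith
          have h3 : 2 / Δt * (u - x) = 2 * (u - x) / Δt := by ring
          linarith [h3 ▸ h2]
      exact this (Set.mem_Icc.2 ⟨hy.1, hxy⟩) (Set.mem_Icc.2 ⟨hx.1, le_rfl⟩) hxy
  simp only [hh] at key
  have : ((x : ℝ) - x) ^ 2 / Δt = 0 := by simp
  nlinarith [key]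

/-- Energy stability of the semi-implicit scheme (Theorem 3.1). -/
theorem semiImplicit_energy_stability (J : ℕ) [NeZero J] (Δt Δx ε γm γp : ℝ)
    (hΔt : 0 < Δt) (hΔx : 0 < Δx) (hε : 0 < ε) (hγ : γm < γp)
    (F f f' : ℝ → ℝ)
    (hF : ∀ u ∈ Set.Icc γm γp, HasDerivAt F (f u) u)
    (hf : ∀ u ∈ Set.Icc γm γp, HasDerivAt f (f' u) u)
    (hcont : ContinuousOn f' (Set.Icc γm γp))
    (hstep : ∀ u ∈ Set.Icc γm γp, Δt * f' u ≤ 2)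
    (φn φn1 : ZMod J → ℝ)
    (hbn : ∀ j, φn j ∈ Set.Icc γm γp) (hbn1 : ∀ j, φn1 j ∈ Set.Icc γm γp)
    (hscheme : ∀ j, (φn1 j - φn j) / Δt =
      ε ^ 2 * ((φn1 (j + 1) - 2 * φn1 j + φn1 (j - 1)) / Δx ^ 2) - f (φn j)) :
    (ε ^ 2 / 2) * (∑ j : ZMod J, ((φn1 (j + 1) - φn1 j) / Δx) ^ 2 * Δx) +
        ∑ j : ZMod J, F (φn1 j) * Δx ≤
      (ε ^ 2 / 2) * (∑ j : ZMod J, ((φn (j + 1) - φn j) / Δx) ^ 2 * Δx) +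
        ∑ j : ZMod J, F (φn j) * Δx := by
  have hΔx' : (Δx : ℝ) ≠ 0 := ne_of_gt hΔx
  have hΔt' : (Δt : ℝ) ≠ 0 := ne_of_gt hΔt
  set δ : ZMod J → ℝ := fun j => φn1 j - φn j with hδ
  set L : ZMod J → ℝ := fun j => φn1 (j + 1) - 2 * φn1 j + φn1 (j - 1) with hL
  -- Step 1: potential part estimate, per j
  have step1 : ∀ j, F (φn1 j) * Δx - F (φn j) * Δx ≤ ε ^ 2 / Δx * (L j * δ j) := by
    intro j
    have htan := tangent_est Δt γm γp hΔt F f f' hF hf hstep (hbn j) (hbn1 j)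
    have hs := hscheme j
    -- f (φn j) * δ j + δ j ^ 2 / Δt = ε ^ 2 * (L j / Δx ^ 2) * δ j
    have hfd : f (φn j) * δ j + δ j ^ 2 / Δt = ε ^ 2 * (L j / Δx ^ 2) * δ j := by
      have : δ j / Δt = ε ^ 2 * (L j / Δx ^ 2) - f (φn j) := hs
      field_simp at this ⊢
      linear_combination δ j * this
    have h1 : F (φn1 j) - F (φn j) ≤ ε ^ 2 * (L j / Δx ^ 2) * δ j := by
      have := htan
      simp only [hδ] at hfd ⊢
      nlinarith [htan]
    calc F (φn1 j) * Δx - F (φn j) * Δx = (F (φn1 j) - F (φn j)) * Δx := by ring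
    _ ≤ (ε ^ 2 * (L j / Δx ^ 2) * δ j) * Δx := by
        exact mul_le_mul_of_nonneg_right h1 hΔx.le
    _ = ε ^ 2 / Δx * (L j * δ j) := by field_simp
  -- Step 2: summation by parts
  have sbp : ∑ j : ZMod J, (φn1 (j + 1) - φn1 j) * (δ (j + 1) - δ j)
      = - ∑ j : ZMod J, L j * δ j := by
    have shift : ∑ j : ZMod J, (φn1 (j + 1) - φn1 j) * δ (j + 1)
        = ∑ j : ZMod J, (φn1 j - φn1 (j - 1)) * δ j := by
      have := zmod_sum_shift J (fun j => (φn1 j - φn1 (j - 1)) * δ j)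
      simpa using this
    have expand : ∀ j : ZMod J,
        (φn1 (j + 1) - φn1 j) * (δ (j + 1) - δ j) + L j * δ j
        = (φn1 (j + 1) - φn1 j) * δ (j + 1) - (φn1 j - φn1 (j - 1)) * δ j := by
      intro j; simp only [hL]; ring
    have hsum : ∑ j : ZMod J, ((φn1 (j + 1) - φn1 j) * (δ (j + 1) - δ j) + L j * δ j)
        = 0 := by
      rw [Finset.sum_congr rfl (fun j _ => expand j), Finset.sum_sub_distrib, shift,
        sub_self]
    rw [Finset.sum_add_distrib] at hsum
    linarith
  -- Step 3: gradient identity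
  have grad : (ε ^ 2 / 2) * (∑ j : ZMod J, ((φn1 (j + 1) - φn1 j) / Δx) ^ 2 * Δx)
      - (ε ^ 2 / 2) * (∑ j : ZMod J, ((φn (j + 1) - φn j) / Δx) ^ 2 * Δx)
      = ε ^ 2 / Δx * ∑ j : ZMod J, (φn1 (j + 1) - φn1 j) * (δ (j + 1) - δ j)
        - ε ^ 2 / (2 * Δx) * ∑ j : ZMod J, (δ (j + 1) - δ j) ^ 2 := by
    rw [Finset.mul_sum, Finset.mul_sum, Finset.mul_sum, Finset.mul_sum,
      ← Finset.sum_sub_distrib, ← Finset.sum_sub_distrib]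
    apply Finset.sum_congr rfl
    intro j _
    simp only [hδ]
    field_simp
    ring
  -- Combine
  have sumF : ∑ j : ZMod J, F (φn1 j) * Δx - ∑ j : ZMod J, F (φn j) * Δx
      ≤ ε ^ 2 / Δx * ∑ j : ZMod J, L j * δ j := by
    rw [← Finset.sum_sub_distrib, Finset.mul_sum]
    exact Finset.sum_le_sum fun j _ => step1 j
  have hsq : (0 : ℝ) ≤ ∑ j : ZMod J, (δ (j + 1) - δ j) ^ 2 :=
    Finset.sum_nonneg fun j _ => sq_nonneg _
  have hcoef : (0 : ℝ) ≤ ε ^ 2 / (2 * Δx) := by positivity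
  rw [sbp] at grad
  nlinarith [sumF, grad, mul_nonneg hcoef hsq]
end
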